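/- Let x̄_t be a Markov process with càdlàg paths and possibly finite lifetime in E = ℝ^d ∖ {0}, d ≥ 2, with laws (P_x), let o = (0,…,0,1), and write ρ_t = |x̄_t| and ξ_t = x̄_t/|x̄_t|. Suppose Π is a Borel measure on E such that for every bounded continuous function f: E → ℝ vanishing on some neighborhood of o, the limit lim_{t→0+} E_o[f(x̄_t)]/t exists and equals Π(f) (where f is extended by 0 after the lifetime), and Π(f) is finite for all such f. If under P_o the processes (ρ_t) and (ξ_t) are independent, then Π is concentrated on R ∪ S^{d−1}, where R = {r·o : r > 0} and S^{d−1} is the unit sphere; that is, every point (r, θ) ∈ E with r = |x| ≠ 1 and θ = x/|x| ≠ o lies outside the support of Π. -/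

import Mathlib

open MeasureTheory ProbabilityTheory Filter Topology Pointwise

noncomputable section


/-- Euclidean space `ℝ^d`. -/
abbrev EV (d : ℕ) := EuclideanSpace ℝ (Fin d)

/-- The canonical path space.  The origin `0` serves as the cemetery point, so that a
càdlàg path in `E = ℝ^d ∖ {0}` with possibly finite lifetime is encoded as a function
`ℝ → ℝ^d` which is equal to `0` from its lifetime on. -/
abbrev EPath (d : ℕ) := ℝ → EV d

/-- The natural filtration of the coordinate process on path space. -/
def filt (d : ℕ) (t : ℝ) : MeasurableSpace (EPath d) :=
  ⨆ (s : ℝ) (_ : s ∈ Set.Icc 0 t), MeasurableSpace.comap (fun ω => ω s) inferInstance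

/-- The natural filtration of the radial part of the coordinate process. -/
def radFilt (d : ℕ) (t : ℝ) : MeasurableSpace (EPath d) :=
  ⨆ (s : ℝ) (_ : s ∈ Set.Icc 0 t), MeasurableSpace.comap (fun ω => ‖ω s‖) inferInstance

/-- `ω` is a càdlàg path in `E = ℝ^d ∖ {0}` with (possibly finite) lifetime:  the origin
`0` is an absorbing cemetery state, `ω t ≠ 0` means that `t` is strictly before the
lifetime, `ω` is right continuous and has left limits before its lifetime, and `ω` is
normalized to be constant on negative times. -/
def PathOK (d : ℕ) (ω : EPath d) : Prop :=
  (∀ t : ℝ, t < 0 → ω t = ω 0) ∧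
  (∀ s t : ℝ, 0 ≤ s → s ≤ t → ω s = 0 → ω t = 0) ∧
  (∀ t : ℝ, 0 ≤ t → ω t ≠ 0 → Filter.Tendsto ω (𝓝[>] t) (𝓝 (ω t))) ∧
  (∀ t : ℝ, 0 < t → ω t ≠ 0 → ∃ l, Filter.Tendsto ω (𝓝[<] t) (𝓝 l))

/-- A time homogeneous Markov process with values in `E = ℝ^d ∖ {0}`, with càdlàg paths
and possibly finite lifetime (`0` being the absorbing cemetery state), described by its
transition kernels `κ t` and its laws `law x` (the distribution of the process started at
`x`) on the canonical path space. -/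
structure MarkovFamily (d : ℕ) where
  law : EV d → Measure (EPath d)
  κ : ℝ → Kernel (EV d) (EV d)
  isProb : ∀ x, IsProbabilityMeasure (law x)
  start : ∀ x, law x {ω | ω 0 = x} = 1
  kernelMarkov : ∀ t, 0 ≤ t → IsMarkovKernel (κ t)
  absorbing : ∀ t, 0 ≤ t → κ t 0 = Measure.dirac 0
  cadlag : ∀ x, ∀ᵐ ω ∂(law x), PathOK d ω
  markov : ∀ x, ∀ t s : ℝ, 0 ≤ t → 0 ≤ s → ∀ A : Set (EPath d),
    MeasurableSet[filt d t] A → ∀ B : Set (EV d), MeasurableSet B →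
    law x (A ∩ (fun ω => ω (t + s)) ⁻¹' B) = ∫⁻ ω in A, κ s (ω t) B ∂(law x)

/-- The transition function is isotropic (`O(d)`-invariant):
`P_t(φ x, φ B) = P_t(x, B)` for every orthogonal transformation `φ`. -/
def Isotropic (d : ℕ) (κ : ℝ → Kernel (EV d) (EV d)) : Prop :=
  ∀ φ : EV d ≃ₗᵢ[ℝ] EV d, ∀ t : ℝ, 0 ≤ t → ∀ x : EV d, ∀ B : Set (EV d),
    MeasurableSet B → κ t (φ x) (φ '' B) = κ t x B

/-- The transition function is `α`-self-similar:
`P_{λ t}(x, B) = P_t(λ^{-α} x, λ^{-α} B)` for all `λ > 0`. -/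
def SelfSimilar (d : ℕ) (α : ℝ) (κ : ℝ → Kernel (EV d) (EV d)) : Prop :=
  ∀ lam : ℝ, 0 < lam → ∀ t : ℝ, 0 ≤ t → ∀ x : EV d, ∀ B : Set (EV d), MeasurableSet B →
    κ (lam * t) x B = κ t (lam ^ (-α) • x) (lam ^ (-α) • B)

/-- The Lamperti additive functional `A_t = ∫_0^t |x_s|^{-1/α} ds`. -/
def lampA (d : ℕ) (α : ℝ) (ω : EPath d) (t : ℝ) : ℝ :=
  ∫ s in (0:ℝ)..t, ‖ω s‖ ^ (-α⁻¹)

/-- The inverse `T_t = inf{s ≥ 0 : A_s ≥ t}` of the Lamperti additive functional. -/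
def lampT (d : ℕ) (α : ℝ) (ω : EPath d) (t : ℝ) : ℝ :=
  sInf {s : ℝ | 0 ≤ s ∧ t ≤ lampA d α ω s}

open Classical in
/-- The Lamperti time changed path `x̄_t = x_{T_t}`, defined for `t < A_{ζ-}` and sent to
the cemetery `0` afterwards. -/
def timeChanged (d : ℕ) (α : ℝ) (ω : EPath d) : EPath d := fun t =>
  if 0 ≤ t ∧ ∃ s : ℝ, 0 ≤ s ∧ ω s ≠ 0 ∧ t < lampA d α ω s then ω (lampT d α ω t) else 0



/-- Proposition 1 of Liao–Wang, necessity half.  Let `x̄` be a Markov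
process in `E = ℝ^d ∖ {0}` (`d ≥ 2`) with càdlàg paths and possibly finite lifetime, let
`o = (0, …, 0, 1)`, and write `ρ_t = |x̄_t|`, `ξ_t = x̄_t/|x̄_t|` for its radial and angular
parts.  Suppose `Π` is a Borel measure on `E` such that for every bounded continuous
function `f : E → ℝ` vanishing on a neighborhood of `o`, the quantity `E_o[f(x̄_t)]/t`
(with `f` extended by `0` after the lifetime) converges as `t → 0+` to the finite value
`Π(f)`.  If under `P_o` the radial process and the angular process are independent, then
every point of `E` whose radial part differs from `1` and whose angular part differs from
`o` lies outside the support of `Π`; that is, `Π` is concentrated on `R ∪ S^{d-1}`. -/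
theorem stmt4 (d : ℕ) (hd : 2 ≤ d) (M : MarkovFamily d)
    (o : EV d) (ho : o = EuclideanSpace.single (⟨d - 1, by omega⟩ : Fin d) (1 : ℝ))
    (Lev : Measure (EV d)) (hLev0 : Lev {0} = 0)
    (hgen : ∀ f : EV d → ℝ, ContinuousOn f {v : EV d | v ≠ 0} → (∃ C : ℝ, ∀ v, |f v| ≤ C) →
      (∃ U ∈ 𝓝 o, ∀ y ∈ U, f y = 0) →
      Integrable f Lev ∧
      Filter.Tendsto
        (fun t : ℝ => (∫ ω, Set.indicator {v : EV d | v ≠ 0} f (ω t) ∂(M.law o)) / t)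
        (𝓝[>] (0 : ℝ)) (𝓝 (∫ y, f y ∂Lev)))
    (hindep : IndepFun (fun ω : EPath d => fun t : ℝ => ‖ω t‖)
      (fun ω : EPath d => fun t : ℝ => ‖ω t‖⁻¹ • ω t) (M.law o)) :
    ∀ x : EV d, x ≠ 0 → ‖x‖ ≠ 1 → ‖x‖⁻¹ • x ≠ o → ∃ U ∈ 𝓝 x, Lev U = 0 := by
  intro x hx0 hr1 hxio
  classical
  set μ := M.law o with hμdef
  haveI : IsProbabilityMeasure μ := M.isProb o
  have hnormo : ‖o‖ = 1 := by rw [ho]; simp [EuclideanSpace.norm_single]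
  have ho0 : o ≠ 0 := by intro h; rw [h] at hnormo; simp at hnormo
  have hrx : ‖x‖ ≠ 0 := norm_ne_zero_iff.mpr hx0
  set ξ₀ : EV d := ‖x‖⁻¹ • x with hξ₀def
  have hξnorm : ‖ξ₀‖ = 1 := by
    rw [hξ₀def, norm_smul, norm_inv, norm_norm, inv_mul_cancel₀ hrx]
  set ε : ℝ := |‖x‖ - 1| / 2 with hεdef
  have hε : 0 < ε := by
    have : (0:ℝ) < |‖x‖ - 1| := abs_pos.mpr (sub_ne_zero.mpr hr1)
    linarith
  set δ : ℝ := ‖ξ₀ - o‖ / 2 with hδdef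
  have hδ : 0 < δ := by
    have : (0:ℝ) < ‖ξ₀ - o‖ := by
      rw [norm_pos_iff]; exact sub_ne_zero.mpr hxio
    linarith
  set g : ℝ → ℝ := fun r => max 0 (1 - ε⁻¹ * |r - ‖x‖|) with hgdef
  set h : EV d → ℝ := fun v => max 0 (1 - δ⁻¹ * ‖v - ξ₀‖) with hhdef
  have hg0 : ∀ r, 0 ≤ g r := fun r => le_max_left _ _
  have hh0 : ∀ v, 0 ≤ h v := fun v => le_max_left _ _
  have hg1 : ∀ r, g r ≤ 1 := by
    intro r
    have := mul_nonneg (inv_nonneg.mpr hε.le) (abs_nonneg (r - ‖x‖))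
    exact max_le (by norm_num) (by linarith)
  have hh1 : ∀ v, h v ≤ 1 := by
    intro v
    have := mul_nonneg (inv_nonneg.mpr hδ.le) (norm_nonneg (v - ξ₀))
    exact max_le (by norm_num) (by linarith)
  have hgz : ∀ r, ε ≤ |r - ‖x‖| → g r = 0 := by
    intro r hr
    have h1 : (1:ℝ) ≤ ε⁻¹ * |r - ‖x‖| := by
      rw [le_inv_mul_iff₀ hε]; linarith
    exact max_eq_left (by linarith)
  have hhz : ∀ v, δ ≤ ‖v - ξ₀‖ → h v = 0 := by
    intro v hv
    have h1 : (1:ℝ) ≤ δ⁻¹ * ‖v - ξ₀‖ := by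
      rw [le_inv_mul_iff₀ hδ]; linarith
    exact max_eq_left (by linarith)
  have hgc : Continuous g := by rw [hgdef]; fun_prop
  have hhc : Continuous h := by rw [hhdef]; fun_prop
  set f1 : EV d → ℝ := fun y => g ‖y‖ with hf1def
  set f2 : EV d → ℝ := fun y => h (‖y‖⁻¹ • y) with hf2def
  set f : EV d → ℝ := fun y => f1 y * f2 y with hfdef
  -- continuity facts
  have hξcont : ContinuousOn (fun v : EV d => ‖v‖⁻¹ • v) {v : EV d | v ≠ 0} := by
    exact (continuous_norm.continuousOn.inv₀
      (fun v hv => norm_ne_zero_iff.mpr hv)).smul continuousOn_id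
  have hf1c : Continuous f1 := hgc.comp continuous_norm
  have hf2c : ContinuousOn f2 {v : EV d | v ≠ 0} := hhc.comp_continuousOn hξcont
  have hfc : ContinuousOn f {v : EV d | v ≠ 0} := hf1c.continuousOn.mul hf2c
  -- vanishing neighborhoods of o
  have hvan1 : ∃ U ∈ 𝓝 o, ∀ y ∈ U, f1 y = 0 := by
    refine ⟨Metric.ball o ε, Metric.ball_mem_nhds o hε, fun y hy => ?_⟩
    have hy' : ‖y - o‖ < ε := by
      rw [Metric.mem_ball, dist_eq_norm] at hy; exact hy
    have t1 : |‖y‖ - 1| < ε := by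
      have := abs_norm_sub_norm_le y o
      rw [hnormo] at this; linarith
    have t2 : |‖x‖ - 1| ≤ |‖x‖ - ‖y‖| + |‖y‖ - 1| := abs_sub_le _ _ _
    apply hgz
    rw [abs_sub_comm]
    have : |‖x‖ - 1| = 2 * ε := by rw [hεdef]; ring
    linarith
  have hvan2 : ∃ U ∈ 𝓝 o, ∀ y ∈ U, f2 y = 0 := by
    have hξA : ContinuousAt (fun v : EV d => ‖v‖⁻¹ • v) o :=
      hξcont.continuousAt (isOpen_ne.mem_nhds ho0)
    have hξoeq : ‖o‖⁻¹ • o = o := by rw [hnormo]; simp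
    refine ⟨(fun v : EV d => ‖v‖⁻¹ • v) ⁻¹' Metric.ball o δ, ?_, fun y hy => ?_⟩
    · apply hξA.preimage_mem_nhds
      rw [hξoeq]
      exact Metric.ball_mem_nhds o hδ
    · have hy' : ‖(‖y‖⁻¹ • y) - o‖ < δ := by
        have := hy
        rw [Set.mem_preimage, Metric.mem_ball, dist_eq_norm] at this; exact this
      apply hhz
      have t2 : ‖ξ₀ - o‖ ≤ ‖ξ₀ - ‖y‖⁻¹ • y‖ + ‖(‖y‖⁻¹ • y) - o‖ := norm_sub_le_norm_sub_add_norm_sub _ _ _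
      have t3 : ‖ξ₀ - o‖ = 2 * δ := by rw [hδdef]; ring
      rw [norm_sub_rev]
      linarith
  -- apply the generator hypothesis
  have H1 := hgen f1 hf1c.continuousOn
    ⟨1, fun v => by rw [abs_of_nonneg (hg0 _)]; exact hg1 _⟩ hvan1
  have H2 := hgen f2 hf2c
    ⟨1, fun v => by rw [abs_of_nonneg (hh0 _)]; exact hh1 _⟩ hvan2
  have H3 := hgen f hfc
    ⟨1, fun v => by
      rw [abs_of_nonneg (mul_nonneg (hg0 _) (hh0 _))]
      exact mul_le_one₀ (hg1 _) (hh0 _) (hh1 _)⟩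
    (by
      obtain ⟨U, hU, hU0⟩ := hvan2
      exact ⟨U, hU, fun y hy => by rw [hfdef]; simp [hU0 y hy]⟩)
  -- factorization of the expectation via independence
  have key : ∀ t : ℝ,
      (∫ ω, Set.indicator {v : EV d | v ≠ 0} f (ω t) ∂μ)
        = (∫ ω, Set.indicator {v : EV d | v ≠ 0} f1 (ω t) ∂μ)
          * (∫ ω, Set.indicator {v : EV d | v ≠ 0} f2 (ω t) ∂μ) := by
    intro t
    set X : EPath d → (ℝ → ℝ) := fun ω => fun s => ‖ω s‖ with hXdef
    set Y : EPath d → (ℝ → EV d) := fun ω => fun s => ‖ω s‖⁻¹ • ω s with hYdef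
    set φ : (ℝ → ℝ) → ℝ := fun u => Set.indicator {r : ℝ | r ≠ 0} g (u t) with hφdef
    set ψ : (ℝ → EV d) → ℝ := fun u => Set.indicator {v : EV d | v ≠ 0} h (u t) with hψdef
    have hφm : Measurable φ :=
      (hgc.measurable.indicator isOpen_ne.measurableSet).comp (measurable_pi_apply t)
    have hψm : Measurable ψ :=
      (hhc.measurable.indicator isOpen_ne.measurableSet).comp (measurable_pi_apply t)
    have hXm : Measurable X :=
      measurable_pi_lambda _ fun s => (measurable_pi_apply s).norm
    have hYm : Measurable Y :=
      measurable_pi_lambda _ fun s => ((measurable_pi_apply s).norm.inv).smul (measurable_pi_apply s)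
    have hind2 : IndepFun (φ ∘ X) (ψ ∘ Y) μ := hindep.comp hφm hψm
    have e1 : (φ ∘ X) = fun ω : EPath d => Set.indicator {v : EV d | v ≠ 0} f1 (ω t) := by
      funext ω
      by_cases hω : ω t = 0
      · simp [hφdef, hXdef, Set.indicator_apply, hω]
      · simp [hφdef, hXdef, Set.indicator_apply, hω, norm_ne_zero_iff.mpr hω, hf1def]
    have e2 : (ψ ∘ Y) = fun ω : EPath d => Set.indicator {v : EV d | v ≠ 0} f2 (ω t) := by
      funext ω
      by_cases hω : ω t = 0
      · simp [hψdef, hYdef, Set.indicator_apply, hω]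
      · have hn1 : ‖‖ω t‖⁻¹ • ω t‖ = 1 := by
          rw [norm_smul, norm_inv, norm_norm, inv_mul_cancel₀ (norm_ne_zero_iff.mpr hω)]
        have hne : ‖ω t‖⁻¹ • ω t ≠ 0 := by
          intro hc; rw [hc] at hn1; simp at hn1
        simp [hψdef, hYdef, Set.indicator_apply, hω, hne, hf2def]
    have e3 : (fun ω : EPath d => Set.indicator {v : EV d | v ≠ 0} f (ω t))
        = (φ ∘ X) * (ψ ∘ Y) := by
      rw [e1, e2]
      funext ω
      by_cases hω : ω t = 0
      · simp [Set.indicator_apply, hω]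
      · simp [Set.indicator_apply, hω, hfdef]
    have hI := IndepFun.integral_mul_eq_mul_integral hind2 (hφm.comp hXm).aestronglyMeasurable
      (hψm.comp hYm).aestronglyMeasurable
    rw [e3, hI, e1, e2]
  -- pass to the limit
  set A1 : ℝ → ℝ := fun t => ∫ ω, Set.indicator {v : EV d | v ≠ 0} f1 (ω t) ∂μ with hA1def
  set A2 : ℝ → ℝ := fun t => ∫ ω, Set.indicator {v : EV d | v ≠ 0} f2 (ω t) ∂μ with hA2def
  have htid : Tendsto (fun t : ℝ => t) (𝓝[>] (0:ℝ)) (𝓝 0) :=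
    tendsto_id.mono_left nhdsWithin_le_nhds
  have h2' : Tendsto A2 (𝓝[>] (0:ℝ)) (𝓝 0) := by
    have hmul := H2.2.mul htid
    rw [mul_zero] at hmul
    apply hmul.congr'
    filter_upwards [self_mem_nhdsWithin] with t ht
    exact div_mul_cancel₀ _ (ne_of_gt ht)
  have hlim0 : Tendsto
      (fun t : ℝ => (∫ ω, Set.indicator {v : EV d | v ≠ 0} f (ω t) ∂μ) / t)
      (𝓝[>] (0:ℝ)) (𝓝 0) := by
    have hmul := H1.2.mul h2'
    rw [mul_zero] at hmul
    apply hmul.congr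
    intro t
    rw [key t, mul_div_right_comm]
  have hfzero : ∫ y, f y ∂Lev = 0 := tendsto_nhds_unique H3.2 hlim0
  have hfnn : ∀ y, 0 ≤ f y := fun y => mul_nonneg (hg0 _) (hh0 _)
  have hae : f =ᵐ[Lev] 0 :=
    (integral_eq_zero_iff_of_nonneg_ae (ae_of_all _ hfnn) H3.1).mp hfzero
  have hnull : Lev {y | f y ≠ 0} = 0 := by
    have := hae
    rw [Filter.EventuallyEq, ae_iff] at this
    simpa using this
  refine ⟨{v : EV d | v ≠ 0} ∩ f ⁻¹' Set.Ioi (1/2 : ℝ), ?_, ?_⟩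
  · apply (hfc.isOpen_inter_preimage isOpen_ne isOpen_Ioi).mem_nhds
    constructor
    · exact hx0
    · have hfx : f x = 1 := by
        have e1 : f1 x = 1 := by
          rw [hf1def]; simp [hgdef]
        have e2 : f2 x = 1 := by
          rw [hf2def]; simp only [← hξ₀def]; simp [hhdef]
        rw [hfdef]; simp only []; rw [e1, e2, mul_one]
      simp only [Set.mem_preimage, Set.mem_Ioi, hfx]
      norm_num
  · apply measure_mono_null _ hnull
    intro y hy
    have : f y ∈ Set.Ioi (1/2 : ℝ) := hy.2
    simp only [Set.mem_setOf_eq]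
    intro hc
    rw [hc] at this
    simp at this
    linarith

end
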